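/- Every subgroup of SO(3) isomorphic to O(2) is of the form { F · blockdiag(A, det A) · F^⊤ : A ∈ O(2) } for some F ∈ SO(3), where blockdiag(A, det A) denotes the 3×3 matrix with A in the upper-left 2×2 block and det(A) in the lower-right corner. -/

import Mathlib

open Matrix

/-- The standard block embedding `O(2) → SO(3)`, `A ↦ blockdiag(A, det A)`. -/
noncomputable def blockEmbed (A : Matrix (Fin 2) (Fin 2) ℝ) : Matrix (Fin 3) (Fin 3) ℝ :=
  Matrix.reindex (finSumFinEquiv (m := 2) (n := 1)) (finSumFinEquiv (m := 2) (n := 1))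
    (Matrix.fromBlocks A 0 0 (Matrix.of fun _ _ => A.det))

open Real

lemma starR {n : Type*} [Fintype n] [DecidableEq n] (A : Matrix n n ℝ) : star A = Aᵀ := by
  ext i j; simp [Matrix.star_apply]

lemma memO_iff {n : Type*} [Fintype n] [DecidableEq n] (A : Matrix n n ℝ) :
    A ∈ Matrix.orthogonalGroup n ℝ ↔ Aᵀ * A = 1 := by
  rw [Matrix.mem_orthogonalGroup_iff']

lemma memO_iff' {n : Type*} [Fintype n] [DecidableEq n] (A : Matrix n n ℝ) :
    A ∈ Matrix.orthogonalGroup n ℝ ↔ A * Aᵀ = 1 := by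
  rw [Matrix.mem_orthogonalGroup_iff]

noncomputable def rot (θ : ℝ) : Matrix (Fin 2) (Fin 2) ℝ :=
  !![Real.cos θ, -Real.sin θ; Real.sin θ, Real.cos θ]

lemma rot_mem (θ : ℝ) : rot θ ∈ Matrix.orthogonalGroup (Fin 2) ℝ := by
  rw [memO_iff]
  ext i j
  fin_cases i <;> fin_cases j <;>
    simp [rot, Matrix.mul_apply, Fin.sum_univ_two, Matrix.one_apply, Matrix.vecHead,
      Matrix.vecTail] <;> nlinarith [sin_sq_add_cos_sq θ]

lemma rot_det (θ : ℝ) : (rot θ).det = 1 := by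
  simp [rot, Matrix.det_fin_two]; nlinarith [sin_sq_add_cos_sq θ]

lemma rot_add (a b : ℝ) : rot (a + b) = rot a * rot b := by
  ext i j
  fin_cases i <;> fin_cases j <;>
    simp [rot, Matrix.mul_apply, Fin.sum_univ_two, cos_add, sin_add, Matrix.vecHead,
      Matrix.vecTail] <;> ring

lemma rot_zero : rot 0 = 1 := by
  ext i j; fin_cases i <;> fin_cases j <;> simp [rot, Matrix.one_apply]

lemma rot_continuous : Continuous rot := by
  apply continuous_matrix
  intro i j
  fin_cases i <;> fin_cases j <;>
    simp [rot] <;> fun_prop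

lemma rot_surj {A : Matrix (Fin 2) (Fin 2) ℝ} (hA : A ∈ Matrix.orthogonalGroup (Fin 2) ℝ)
    (hdet : A.det = 1) : ∃ θ ∈ Set.Icc (-Real.pi) Real.pi, A = rot θ := by
  rw [memO_iff] at hA
  have h00 : A 0 0 * A 0 0 + A 1 0 * A 1 0 = 1 := by
    have := congrFun (congrFun hA 0) 0
    simpa [Matrix.mul_apply, Fin.sum_univ_two, Matrix.one_apply] using this
  have h01 : A 0 0 * A 0 1 + A 1 0 * A 1 1 = 0 := by
    have := congrFun (congrFun hA 0) 1
    simpa [Matrix.mul_apply, Fin.sum_univ_two, Matrix.one_apply] using this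
  have hd : A 0 0 * A 1 1 - A 0 1 * A 1 0 = 1 := by
    have := hdet; rwa [Matrix.det_fin_two] at this
  obtain ⟨θ, hmem, hc, hs⟩ :
      ∃ θ ∈ Set.Icc (-Real.pi) Real.pi, Real.cos θ = A 0 0 ∧ Real.sin θ = A 1 0 := by
    have h1 : A 0 0 ∈ Set.Icc (-1:ℝ) 1 := by
      constructor <;> nlinarith
    have habs : Real.sqrt (1 - A 0 0 ^ 2) = |A 1 0| := by
      rw [show (1 : ℝ) - A 0 0 ^ 2 = A 1 0 ^ 2 by nlinarith]
      exact Real.sqrt_sq_eq_abs _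
    have harc1 : 0 ≤ Real.arccos (A 0 0) := Real.arccos_nonneg _
    have harc2 : Real.arccos (A 0 0) ≤ Real.pi := Real.arccos_le_pi _
    have hpi : 0 < Real.pi := Real.pi_pos
    by_cases h : 0 ≤ A 1 0
    · exact ⟨Real.arccos (A 0 0), ⟨by linarith, harc2⟩, Real.cos_arccos h1.1 h1.2,
        by rw [Real.sin_arccos, habs, abs_of_nonneg h]⟩
    · push_neg at h
      refine ⟨-Real.arccos (A 0 0), ⟨by linarith, by linarith⟩, ?_, ?_⟩
      · rw [Real.cos_neg]; exact Real.cos_arccos h1.1 h1.2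
      · rw [Real.sin_neg, Real.sin_arccos, habs, abs_of_neg h]; ring
  refine ⟨θ, hmem, ?_⟩
  have h11 : A 1 1 = A 0 0 := by linear_combination A 0 0 * hd + A 1 0 * h01 - A 1 1 * h00
  have h01' : A 0 1 = -(A 1 0) := by linear_combination A 0 0 * h01 - A 1 0 * hd - A 0 1 * h00
  ext i j
  fin_cases i <;> fin_cases j <;> simp [rot, hc, hs, h11, h01']

lemma detO2 {n : Type*} [Fintype n] [DecidableEq n] {A : Matrix n n ℝ}
    (hA : A ∈ Matrix.orthogonalGroup n ℝ) : A.det = 1 ∨ A.det = -1 := by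
  have : A.det * A.det = 1 := by
    have := congrArg Matrix.det ((memO_iff A).1 hA)
    rwa [Matrix.det_mul, Matrix.det_transpose, Matrix.det_one] at this
  rcases mul_self_eq_one_iff.1 this with h | h
  · exact Or.inl h
  · exact Or.inr h

lemma SO2_comm {A B : Matrix (Fin 2) (Fin 2) ℝ} (hA : A ∈ Matrix.orthogonalGroup (Fin 2) ℝ)
    (hB : B ∈ Matrix.orthogonalGroup (Fin 2) ℝ) (hdA : A.det = 1) (hdB : B.det = 1) :
    A * B = B * A := by
  obtain ⟨a, -, rfl⟩ := rot_surj hA hdA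
  obtain ⟨b, -, rfl⟩ := rot_surj hB hdB
  rw [← rot_add, ← rot_add, add_comm]

lemma rot_two_pi : rot (2 * Real.pi) = 1 := by
  ext i j
  fin_cases i <;> fin_cases j <;>
    simp [rot, Real.cos_two_pi, Real.sin_two_pi, Matrix.one_apply]

noncomputable def rho : Matrix (Fin 2) (Fin 2) ℝ := !![1, 0; 0, -1]

lemma rho_mem : rho ∈ Matrix.orthogonalGroup (Fin 2) ℝ := by
  rw [memO_iff]
  ext i j
  fin_cases i <;> fin_cases j <;>
    simp [rho, Matrix.mul_apply, Fin.sum_univ_two, Matrix.one_apply, Matrix.vecHead, Matrix.vecTail]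

lemma rho_det : rho.det = -1 := by simp [rho, Matrix.det_fin_two]

lemma rho_rot_rho (θ : ℝ) : rho * rot θ * rho = rot (-θ) := by
  ext i j
  fin_cases i <;> fin_cases j <;>
    simp [rho, rot, Matrix.mul_apply, Fin.sum_univ_two, Matrix.vecHead, Matrix.vecTail]

lemma rho_sq : rho * rho = 1 := by
  ext i j
  fin_cases i <;> fin_cases j <;>
    simp [rho, Matrix.mul_apply, Fin.sum_univ_two, Matrix.one_apply, Matrix.vecHead, Matrix.vecTail]

lemma bE_apply (A : Matrix (Fin 2) (Fin 2) ℝ) :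
    blockEmbed A = !![A 0 0, A 0 1, 0; A 1 0, A 1 1, 0; 0, 0, A.det] := by
  ext i j
  fin_cases i <;> fin_cases j <;>
    simp [blockEmbed, Matrix.reindex_apply, Matrix.submatrix_apply, finSumFinEquiv,
      Fin.divNat, Fin.modNat, Matrix.fromBlocks, Fin.addCases, Fin.castLT, Fin.subNat]

lemma bE_mul (A B : Matrix (Fin 2) (Fin 2) ℝ) :
    blockEmbed A * blockEmbed B = blockEmbed (A * B) := by
  rw [bE_apply, bE_apply, bE_apply]
  ext i j
  fin_cases i <;> fin_cases j <;>
    simp [Matrix.mul_apply, Fin.sum_univ_three, Matrix.det_fin_two, Matrix.vecHead,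
      Matrix.vecTail] <;> ring

lemma bE_one : blockEmbed 1 = 1 := by
  rw [bE_apply]
  ext i j
  fin_cases i <;> fin_cases j <;> simp [Matrix.one_apply, Matrix.vecHead, Matrix.vecTail]

lemma bE_transpose (A : Matrix (Fin 2) (Fin 2) ℝ) : (blockEmbed A)ᵀ = blockEmbed Aᵀ := by
  rw [bE_apply, bE_apply]
  ext i j
  fin_cases i <;> fin_cases j <;> simp [Matrix.det_transpose]

lemma bE_mem {A : Matrix (Fin 2) (Fin 2) ℝ} (hA : A ∈ Matrix.orthogonalGroup (Fin 2) ℝ) :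
    blockEmbed A ∈ Matrix.orthogonalGroup (Fin 3) ℝ := by
  rw [memO_iff] at hA ⊢
  rw [bE_transpose, bE_mul, hA, bE_one]

lemma bE_det (A : Matrix (Fin 2) (Fin 2) ℝ) : (blockEmbed A).det = A.det * A.det := by
  rw [bE_apply, Matrix.det_fin_three, Matrix.det_fin_two]
  simp
  ring

def e3 : Fin 3 → ℝ := fun i => if i = 2 then 1 else 0

lemma bE_mulVec_e3 (A : Matrix (Fin 2) (Fin 2) ℝ) :
    blockEmbed A *ᵥ e3 = A.det • e3 := by
  rw [bE_apply]
  ext i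
  fin_cases i <;>
    simp [Matrix.mulVec, dotProduct, Fin.sum_univ_three, e3, Matrix.vecHead, Matrix.vecTail]

-- orthogonal matrices preserve dot products
lemma dot_preserve {M : Matrix (Fin 3) (Fin 3) ℝ} (hM : Mᵀ * M = 1) (u w : Fin 3 → ℝ) :
    (M *ᵥ u) ⬝ᵥ (M *ᵥ w) = u ⬝ᵥ w := by
  rw [dotProduct_mulVec, ← vecMul_transpose, Matrix.vecMul_vecMul, hM, Matrix.vecMul_one]

lemma lagrange (a b c : Fin 3 → ℝ) :
    a ⨯₃ (b ⨯₃ c) = (a ⬝ᵥ c) • b - (a ⬝ᵥ b) • c := by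
  ext i
  fin_cases i <;> simp [cross_apply, dotProduct, Fin.sum_univ_three] <;> ring

lemma cross_zero_dep {v w : Fin 3 → ℝ} (hv : v ≠ 0) (h : v ⨯₃ w = 0) : ∃ c : ℝ, w = c • v := by
  have hvv : v ⬝ᵥ v ≠ 0 := fun h0 => hv (dotProduct_self_eq_zero.mp h0)
  have := lagrange v v w
  rw [h, map_zero] at this
  refine ⟨(v ⬝ᵥ w) / (v ⬝ᵥ v), ?_⟩
  have h2 : (v ⬝ᵥ w) • v = (v ⬝ᵥ v) • w := sub_eq_zero.mp this.symm
  funext i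
  have := congrFun h2 i
  simp only [Pi.smul_apply, smul_eq_mul] at this ⊢
  rw [div_mul_eq_mul_div, eq_div_iff hvv]
  linarith [this]

lemma fix_rows_eq_one {M P : Matrix (Fin 3) (Fin 3) ℝ} (hdet : P.det ≠ 0)
    (hfix : ∀ i, M *ᵥ P i = P i) : M = 1 := by
  have key : P * Mᵀ = P := by
    ext i j
    have := congrFun (hfix i) j
    simp only [Matrix.mulVec, dotProduct] at this
    simp only [Matrix.mul_apply, Matrix.transpose_apply]
    rw [← this]
    exact Finset.sum_congr rfl fun k _ => mul_comm _ _
  have hPU : IsUnit P.det := isUnit_iff_ne_zero.mpr hdet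
  have : Mᵀ = 1 := by
    calc Mᵀ = P⁻¹ * (P * Mᵀ) := by rw [← Matrix.mul_assoc, Matrix.nonsing_inv_mul P hPU, Matrix.one_mul]
    _ = P⁻¹ * P := by rw [key]
    _ = 1 := Matrix.nonsing_inv_mul P hPU
  calc M = Mᵀᵀ := (Matrix.transpose_transpose M).symm
  _ = 1ᵀ := by rw [this]
  _ = 1 := Matrix.transpose_one

lemma cross_preserve {M : Matrix (Fin 3) (Fin 3) ℝ} (hM : Mᵀ * M = 1) (hM' : M * Mᵀ = 1)
    (hdet : M.det = 1) (u v : Fin 3 → ℝ) :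
    (M *ᵥ u) ⨯₃ (M *ᵥ v) = M *ᵥ (u ⨯₃ v) := by
  have key : ∀ z : Fin 3 → ℝ, z ⬝ᵥ ((M *ᵥ u) ⨯₃ (M *ᵥ v)) = z ⬝ᵥ (M *ᵥ (u ⨯₃ v)) := by
    intro z
    set y := Mᵀ *ᵥ z with hy
    have hz : z = M *ᵥ y := by
      rw [hy, mulVec_mulVec, hM', one_mulVec]
    rw [hz, triple_product_eq_det, dot_preserve hM]
    have hmat : (![M *ᵥ y, M *ᵥ u, M *ᵥ v] : Matrix (Fin 3) (Fin 3) ℝ) =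
        (Matrix.of ![y, u, v]) * Mᵀ := by
      ext i j
      simp only [Matrix.mul_apply, Matrix.transpose_apply, Matrix.of_apply]
      fin_cases i <;>
        simp [Matrix.mulVec, dotProduct, mul_comm]
    rw [hmat, Matrix.det_mul, Matrix.det_transpose, hdet, mul_one, triple_product_eq_det]
    rfl
  funext i
  have := key (Pi.single i 1)
  rwa [single_dotProduct, single_dotProduct, one_mul, one_mul] at this

lemma fixed_line {M : Matrix (Fin 3) (Fin 3) ℝ} (hM : Mᵀ * M = 1) (hM' : M * Mᵀ = 1)
    (hdet : M.det = 1) (hM2 : M * M ≠ 1) {v w : Fin 3 → ℝ} (hv0 : v ≠ 0)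
    (hv : M *ᵥ v = v) (hw : M *ᵥ w = w) : ∃ c : ℝ, w = c • v := by
  by_cases hdep : ∃ c : ℝ, w = c • v
  · exact hdep
  exfalso
  have hcr : v ⨯₃ w ≠ 0 := by
    intro h
    exact hdep (cross_zero_dep hv0 h)
  have hu : M *ᵥ (v ⨯₃ w) = v ⨯₃ w := by
    rw [← cross_preserve hM hM' hdet v w, hv, hw]
  set u := v ⨯₃ w with hu_def
  have hdetP : (Matrix.of ![u, v, w] : Matrix (Fin 3) (Fin 3) ℝ).det ≠ 0 := by
    have : (Matrix.of ![u, v, w] : Matrix (Fin 3) (Fin 3) ℝ).det = u ⬝ᵥ (v ⨯₃ w) :=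
      (triple_product_eq_det u v w).symm
    rw [this, ← hu_def]
    exact fun h => hcr (dotProduct_self_eq_zero.mp h)
  have hM1 : M = 1 := by
    apply fix_rows_eq_one hdetP
    intro i
    fin_cases i <;> simpa using (by assumption : _)
  exact hM2 (by rw [hM1, Matrix.one_mul])

lemma exists_unit_fixed {M : Matrix (Fin 3) (Fin 3) ℝ} (hM : Mᵀ * M = 1) (hdet : M.det = 1) :
    ∃ v : Fin 3 → ℝ, v ⬝ᵥ v = 1 ∧ M *ᵥ v = v := by
  have hdet0 : (M - 1).det = 0 := by
    have h1 : (M - 1)ᵀ = Mᵀ * (1 - M) := by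
      rw [Matrix.mul_sub, Matrix.mul_one, hM, Matrix.transpose_sub, Matrix.transpose_one]
    have h2 : (M - 1).det = (M - 1)ᵀ.det := (Matrix.det_transpose _).symm
    have h3 : Mᵀ.det = 1 := by rw [Matrix.det_transpose, hdet]
    have h4 : (1 - M : Matrix (Fin 3) (Fin 3) ℝ) = -(M - 1) := (neg_sub _ _).symm
    have := h2
    rw [h1, Matrix.det_mul, h3, one_mul, h4, Matrix.det_neg] at this
    simp only [Fintype.card_fin] at this
    norm_num at this
    linarith
  obtain ⟨w, hw0, hw⟩ := (Matrix.exists_mulVec_eq_zero_iff).mpr hdet0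
  have hfix : M *ᵥ w = w := by
    have := hw
    rwa [Matrix.sub_mulVec, Matrix.one_mulVec, sub_eq_zero] at this
  have hpos : (0:ℝ) < w ⬝ᵥ w := by
    have hnn : (0:ℝ) ≤ w ⬝ᵥ w := Finset.sum_nonneg fun i _ => mul_self_nonneg _
    rcases lt_or_eq_of_le hnn with h | h
    · exact h
    · exact absurd (dotProduct_self_eq_zero.mp h.symm) hw0
  refine ⟨(Real.sqrt (w ⬝ᵥ w))⁻¹ • w, ?_, ?_⟩
  · rw [smul_dotProduct, dotProduct_smul]
    have hs : Real.sqrt (w ⬝ᵥ w) ≠ 0 := ne_of_gt (Real.sqrt_pos.mpr hpos)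
    rw [smul_eq_mul, smul_eq_mul, ← mul_assoc, ← mul_inv, Real.mul_self_sqrt (le_of_lt hpos),
      inv_mul_cancel₀ (ne_of_gt hpos)]
  · rw [Matrix.mulVec_smul, hfix]

lemma build_frame {v f1 : Fin 3 → ℝ} (hv : v ⬝ᵥ v = 1) (hf1 : f1 ⬝ᵥ f1 = 1)
    (hperp : v ⬝ᵥ f1 = 0) :
    ∃ F : Matrix (Fin 3) (Fin 3) ℝ, Fᵀ * F = 1 ∧ F * Fᵀ = 1 ∧ F.det = 1 ∧ F *ᵥ e3 = v := by
  set f2 := v ⨯₃ f1 with hf2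
  have hf2f2 : f2 ⬝ᵥ f2 = 1 := by
    rw [hf2, cross_dot_cross, hv, hf1, hperp]; ring
  have hvf2 : v ⬝ᵥ f2 = 0 := dot_self_cross v f1
  have hf1f2 : f1 ⬝ᵥ f2 = 0 := dot_cross_self v f1
  have hf2f1 : f2 ⬝ᵥ f1 = 0 := by rw [dotProduct_comm]; exact hf1f2
  have hf2v : f2 ⬝ᵥ v = 0 := by rw [dotProduct_comm]; exact hvf2
  have hf1v : f1 ⬝ᵥ v = 0 := by rw [dotProduct_comm]; exact hperp
  set P : Matrix (Fin 3) (Fin 3) ℝ := Matrix.of ![f1, f2, v] with hP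
  have hPP : ∀ i j, (P * Pᵀ) i j = P i ⬝ᵥ P j := by
    intro i j; simp [Matrix.mul_apply, dotProduct]
  have hPPT : P * Pᵀ = 1 := by
    ext i j
    rw [hPP]
    fin_cases i <;> fin_cases j
    · exact hf1
    · exact hf1f2
    · exact hf1v
    · exact hf2f1
    · exact hf2f2
    · exact hf2v
    · exact hperp
    · exact hvf2
    · exact hv
  have hdetP : P.det = 1 := by
    have h1 : P.det = f1 ⬝ᵥ (f2 ⨯₃ v) := (triple_product_eq_det f1 f2 v).symm
    have h2 : f2 ⨯₃ v = f1 := by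
      have hanti : f2 ⨯₃ v = -(v ⨯₃ f2) := by rw [cross_anticomm]
      rw [hanti, hf2, lagrange, hperp, hv]
      simp
    rw [h1, h2, hf1]
  refine ⟨Pᵀ, ?_, ?_, ?_, ?_⟩
  · rw [Matrix.transpose_transpose]; exact hPPT
  · rw [Matrix.transpose_transpose]
    rw [mul_eq_one_comm] at hPPT
    exact hPPT
  · rw [Matrix.det_transpose]; exact hdetP
  · ext i
    simp [Matrix.mulVec, dotProduct, Fin.sum_univ_three, e3, hP]

lemma exists_frame {v : Fin 3 → ℝ} (hv : v ⬝ᵥ v = 1) :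
    ∃ F : Matrix (Fin 3) (Fin 3) ℝ, Fᵀ * F = 1 ∧ F * Fᵀ = 1 ∧ F.det = 1 ∧ F *ᵥ e3 = v := by
  by_cases h : v 0 = 0 ∧ v 1 = 0
  · apply build_frame hv (f1 := ![1, 0, 0])
    · simp [dotProduct, Fin.sum_univ_three]
    · simp [dotProduct, Fin.sum_univ_three, h.1]
  · have hs : (0:ℝ) < v 0 * v 0 + v 1 * v 1 := by
      rcases not_and_or.mp h with h0 | h0 <;>
        nlinarith [mul_self_nonneg (v 0), mul_self_nonneg (v 1), (mul_self_pos).mpr h0]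
  
    set s := v 0 * v 0 + v 1 * v 1 with hs_def
    apply build_frame hv (f1 := (Real.sqrt s)⁻¹ • ![v 1, -(v 0), 0])
    · rw [smul_dotProduct, dotProduct_smul]
      simp only [dotProduct, Fin.sum_univ_three, Matrix.cons_val_zero, Matrix.cons_val_one,
        Matrix.head_cons, Matrix.cons_val_two, Matrix.tail_cons, smul_eq_mul]
      rw [show v 1 * v 1 + -v 0 * -v 0 + (0:ℝ) * 0 = s by rw [hs_def]; ring]
      rw [← mul_assoc, ← mul_inv, Real.mul_self_sqrt (le_of_lt hs), inv_mul_cancel₀ (ne_of_gt hs)]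
    · rw [dotProduct_smul]
      simp only [dotProduct, Fin.sum_univ_three, Matrix.cons_val_zero, Matrix.cons_val_one,
        Matrix.head_cons, Matrix.cons_val_two, Matrix.tail_cons, smul_eq_mul]
      ring_nf

lemma conj_mulVec {F : Matrix (Fin 3) (Fin 3) ℝ} (hF : Fᵀ * F = 1)
    {v : Fin 3 → ℝ} (hFe3 : F *ᵥ e3 = v) (A : Matrix (Fin 2) (Fin 2) ℝ) :
    (F * blockEmbed A * Fᵀ) *ᵥ v = A.det • v := by
  have hFTv : Fᵀ *ᵥ v = e3 := by
    rw [← hFe3, Matrix.mulVec_mulVec, hF, Matrix.one_mulVec]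
  rw [← Matrix.mulVec_mulVec, ← Matrix.mulVec_mulVec, hFTv, bE_mulVec_e3,
    Matrix.mulVec_smul, hFe3]

lemma conj_mem {F : Matrix (Fin 3) (Fin 3) ℝ} (hF : Fᵀ * F = 1) (hF' : F * Fᵀ = 1)
    (hdetF : F.det = 1) {A : Matrix (Fin 2) (Fin 2) ℝ}
    (hA : A ∈ Matrix.orthogonalGroup (Fin 2) ℝ) :
    F * blockEmbed A * Fᵀ ∈ Matrix.orthogonalGroup (Fin 3) ℝ ∧
      (F * blockEmbed A * Fᵀ).det = 1 := by
  constructor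
  · rw [memO_iff]
    have hB := (memO_iff _).mp (bE_mem hA)
    calc (F * blockEmbed A * Fᵀ)ᵀ * (F * blockEmbed A * Fᵀ)
        = F * ((blockEmbed A)ᵀ * ((Fᵀ * F) * blockEmbed A)) * Fᵀ := by
          simp only [Matrix.transpose_mul, Matrix.transpose_transpose, Matrix.mul_assoc]
      _ = 1 := by rw [hF, Matrix.one_mul, hB, Matrix.mul_one, hF']
  · rcases detO2 hA with h | h <;>
      simp [Matrix.det_mul, bE_det, Matrix.det_transpose, hdetF, h]

lemma stab_classify {F : Matrix (Fin 3) (Fin 3) ℝ} (hF : Fᵀ * F = 1) (hF' : F * Fᵀ = 1)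
    (hdetF : F.det = 1) {v : Fin 3 → ℝ} (hFe3 : F *ᵥ e3 = v)
    {M : Matrix (Fin 3) (Fin 3) ℝ} (hM : Mᵀ * M = 1) (hdetM : M.det = 1)
    {ε : ℝ} (hε : ε * ε = 1) (hMv : M *ᵥ v = ε • v) :
    ∃ A ∈ Matrix.orthogonalGroup (Fin 2) ℝ, A.det = ε ∧ M = F * blockEmbed A * Fᵀ := by
  have hFTv : Fᵀ *ᵥ v = e3 := by
    rw [← hFe3, Matrix.mulVec_mulVec, hF, Matrix.one_mulVec]
  set N := Fᵀ * M * F with hN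
  have hNN : Nᵀ * N = 1 := by
    calc Nᵀ * N = Fᵀ * (Mᵀ * ((F * Fᵀ) * M)) * F := by
          simp only [hN, Matrix.transpose_mul, Matrix.transpose_transpose, Matrix.mul_assoc]
    _ = 1 := by rw [hF', Matrix.one_mul, hM, Matrix.mul_one, hF]
  have hdetN : N.det = 1 := by
    simp [hN, Matrix.det_mul, Matrix.det_transpose, hdetF, hdetM]
  have hNe3 : N *ᵥ e3 = ε • e3 := by
    rw [hN, ← Matrix.mulVec_mulVec, ← Matrix.mulVec_mulVec, hFe3, hMv, Matrix.mulVec_smul, hFTv]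
  have hNTe3 : Nᵀ *ᵥ e3 = ε • e3 := by
    have h1 : Nᵀ *ᵥ (N *ᵥ e3) = e3 := by
      rw [Matrix.mulVec_mulVec, hNN, Matrix.one_mulVec]
    rw [hNe3, Matrix.mulVec_smul] at h1
    have := congrArg (ε • ·) h1
    simp only [smul_smul, hε, one_smul] at this
    exact this
  -- entry equations
  have hcol : ∀ i, N i 2 = ε * e3 i := by
    intro i
    have := congrFun hNe3 i
    simpa [Matrix.mulVec, dotProduct, Fin.sum_univ_three, e3] using this
  have hrow : ∀ j, N 2 j = ε * e3 j := by
    intro j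
    have := congrFun hNTe3 j
    simpa [Matrix.mulVec, dotProduct, Fin.sum_univ_three, e3] using this
  have h02 : N 0 2 = 0 := by simpa [e3] using hcol 0
  have h12 : N 1 2 = 0 := by simpa [e3] using hcol 1
  have h22 : N 2 2 = ε := by simpa [e3] using hcol 2
  have h20 : N 2 0 = 0 := by simpa [e3] using hrow 0
  have h21 : N 2 1 = 0 := by simpa [e3] using hrow 1
  set A : Matrix (Fin 2) (Fin 2) ℝ := !![N 0 0, N 0 1; N 1 0, N 1 1] with hA_def
  have hdetA : A.det = ε := by
    have hexp : N.det = A.det * ε := by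
      rw [Matrix.det_fin_three, hA_def, Matrix.det_fin_two]
      simp [h02, h12, h22, h20, h21]
      ring
    have h1 : A.det * ε = 1 := by rw [← hexp, hdetN]
    calc A.det = A.det * (ε * ε) := by rw [hε, mul_one]
    _ = (A.det * ε) * ε := by ring
    _ = ε := by rw [h1, one_mul]
  have hNbE : N = blockEmbed A := by
    rw [bE_apply, hdetA]
    ext i j
    fin_cases i <;> fin_cases j <;>
      simp [hA_def, h02, h12, h22, h20, h21]
  have hAmem : A ∈ Matrix.orthogonalGroup (Fin 2) ℝ := by
    rw [memO_iff]
    have key : ∀ i j : Fin 3, (Nᵀ * N) i j = (1 : Matrix (Fin 3) (Fin 3) ℝ) i j :=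
      fun i j => by rw [hNN]
    have k00 := key 0 0
    have k01 := key 0 1
    have k10 := key 1 0
    have k11 := key 1 1
    simp only [Matrix.mul_apply, Matrix.transpose_apply, Fin.sum_univ_three, Matrix.one_apply,
      h20, h21, mul_zero, zero_mul, add_zero, if_true, if_false] at k00 k01 k10 k11
    norm_num at k00 k01 k10 k11
    ext i j
    fin_cases i <;> fin_cases j <;>
      simp only [Matrix.mul_apply, Matrix.transpose_apply, Fin.sum_univ_two, Matrix.one_apply,
        hA_def] <;>
      simp [Matrix.cons_val'] <;>
      linarith [k00, k01, k10, k11]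
  exact ⟨A, hAmem, hdetA, by
    rw [← hNbE, hN]
    calc M = (F * Fᵀ) * M * (F * Fᵀ) := by rw [hF', Matrix.one_mul, Matrix.mul_one]
    _ = F * (Fᵀ * M * F) * Fᵀ := by simp only [Matrix.mul_assoc]⟩

lemma hom_period {M : Type*} [Monoid M] {f : ℝ → M} (hf : ∀ a b, f (a + b) = f a * f b)
    (h0 : f 0 = 1) {c : ℝ} (hc : f c = 1) : ∀ k : ℤ, ∀ b : ℝ, f ((k : ℝ) * c + b) = f b := by
  have hneg : ∀ b, f (-c + b) = f b := by
    intro b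
    have h1 : f (c + (-c + b)) = f c * f (-c + b) := hf _ _
    rw [hc, one_mul] at h1
    rw [← h1]
    norm_num
  intro k
  induction k using Int.induction_on with
  | zero => intro b; norm_num
  | succ n ih =>
      intro b
      push_cast
      push_cast at ih
      rw [show ((n:ℝ) + 1) * c + b = (n:ℝ) * c + (c + b) by ring, ih (c + b), hf, hc, one_mul]
  | pred n ih =>
      intro b
      push_cast
      push_cast at ih
      rw [show (-(n:ℝ) - 1) * c + b = -(n:ℝ) * c + (-c + b) by ring, ih (-c + b), hneg b]

section Main

variable {H : Subgroup (Matrix.orthogonalGroup (Fin 3) ℝ)}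

/-- coercion of an element of `H` to a matrix -/
def cmm (x : H) : Matrix (Fin 3) (Fin 3) ℝ := ((x : Matrix.orthogonalGroup (Fin 3) ℝ) : Matrix (Fin 3) (Fin 3) ℝ)

lemma cmm_mul (x y : H) : cmm (x * y) = cmm x * cmm y := rfl

lemma cmm_one : cmm (1 : H) = 1 := rfl

lemma cmm_inj : Function.Injective (cmm (H := H)) := fun x y h =>
  Subtype.ext (Subtype.ext h)

lemma cmm_cont : Continuous (cmm (H := H)) :=
  continuous_subtype_val.comp continuous_subtype_val

/-- the circle subgroup of `H`, as a map `ℝ → Matrix` -/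
noncomputable def qm (e : H ≃* Matrix.orthogonalGroup (Fin 2) ℝ) (θ : ℝ) :
    Matrix (Fin 3) (Fin 3) ℝ := cmm (e.symm ⟨rot θ, rot_mem θ⟩)

lemma qm_hom (e : H ≃* Matrix.orthogonalGroup (Fin 2) ℝ) (a b : ℝ) :
    qm e (a + b) = qm e a * qm e b := by
  have h1 : (⟨rot (a+b), rot_mem _⟩ : Matrix.orthogonalGroup (Fin 2) ℝ) =
      ⟨rot a, rot_mem _⟩ * ⟨rot b, rot_mem _⟩ := Subtype.ext (by simp [rot_add])
  rw [qm, h1, e.symm.map_mul, cmm_mul]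
  rfl

lemma qm_zero (e : H ≃* Matrix.orthogonalGroup (Fin 2) ℝ) : qm e 0 = 1 := by
  have h1 : (⟨rot 0, rot_mem _⟩ : Matrix.orthogonalGroup (Fin 2) ℝ) = 1 :=
    Subtype.ext (by simp [rot_zero])
  rw [qm, h1, e.symm.map_one, cmm_one]

lemma qm_cont (e : H ≃* Matrix.orthogonalGroup (Fin 2) ℝ) (he' : Continuous e.symm) :
    Continuous (qm e) := by
  apply cmm_cont.comp
  apply he'.comp
  exact Continuous.subtype_mk rot_continuous _

/-- the conjugated block embedding circle -/
noncomputable def phim (F : Matrix (Fin 3) (Fin 3) ℝ) (θ : ℝ) : Matrix (Fin 3) (Fin 3) ℝ :=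
  F * blockEmbed (rot θ) * Fᵀ

lemma phim_hom {F : Matrix (Fin 3) (Fin 3) ℝ} (hF : Fᵀ * F = 1) (a b : ℝ) :
    phim F (a + b) = phim F a * phim F b := by
  simp only [phim, rot_add, ← bE_mul]
  calc F * (blockEmbed (rot a) * blockEmbed (rot b)) * Fᵀ
      = F * blockEmbed (rot a) * ((Fᵀ * F) * blockEmbed (rot b)) * Fᵀ := by
        rw [hF, Matrix.one_mul]; simp only [Matrix.mul_assoc]
    _ = F * blockEmbed (rot a) * Fᵀ * (F * blockEmbed (rot b) * Fᵀ) := by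
        simp only [Matrix.mul_assoc]

lemma phim_cont (F : Matrix (Fin 3) (Fin 3) ℝ) : Continuous (phim F) := by
  apply Continuous.matrix_mul
  apply Continuous.matrix_mul continuous_const
  · have : Continuous fun θ => blockEmbed (rot θ) := by
      apply continuous_matrix
      intro i j
      simp only [bE_apply]
      fin_cases i <;> fin_cases j <;>
        · simp only [rot_det, rot]
          simp
          fun_prop
    exact this
  · exact continuous_const

end Main

lemma phim_zero {F : Matrix (Fin 3) (Fin 3) ℝ} (hF' : F * Fᵀ = 1) : phim F 0 = 1 := by
  unfold phim; rw [rot_zero, bE_one, Matrix.mul_one, hF']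

lemma phim_two_pi {F : Matrix (Fin 3) (Fin 3) ℝ} (hF' : F * Fᵀ = 1) :
    phim F (2 * Real.pi) = 1 := by
  unfold phim; rw [rot_two_pi, bE_one, Matrix.mul_one, hF']

/-- Every subgroup of `SO(3)` isomorphic, as a topological group, to `O(2)` is of the form
`{F · blockdiag(A, det A) · Fᵀ : A ∈ O(2)}` for some `F ∈ SO(3)`. -/
theorem O2_subgroups_of_SO3 (H : Subgroup (Matrix.orthogonalGroup (Fin 3) ℝ))
    (hdet : ∀ F ∈ H, (F : Matrix (Fin 3) (Fin 3) ℝ).det = 1)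
    (e : H ≃* Matrix.orthogonalGroup (Fin 2) ℝ)
    (he : Continuous e) (he' : Continuous e.symm) :
    ∃ F : Matrix (Fin 3) (Fin 3) ℝ, F ∈ Matrix.specialOrthogonalGroup (Fin 3) ℝ ∧
      ((fun X : Matrix.orthogonalGroup (Fin 3) ℝ => (X : Matrix (Fin 3) (Fin 3) ℝ)) ''
          (H : Set (Matrix.orthogonalGroup (Fin 3) ℝ))) =
        {M | ∃ A ∈ Matrix.orthogonalGroup (Fin 2) ℝ, M = F * blockEmbed A * Fᵀ} := by
  classical
  -- basic facts about q
  have hq_orth : ∀ θ, (qm e θ)ᵀ * qm e θ = 1 := fun θ =>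
    (memO_iff _).mp ((e.symm ⟨rot θ, rot_mem θ⟩ : H) : Matrix.orthogonalGroup (Fin 3) ℝ).2
  have hq_orth' : ∀ θ, qm e θ * (qm e θ)ᵀ = 1 := fun θ =>
    mul_eq_one_comm.mp (hq_orth θ)
  have hq_det : ∀ θ, (qm e θ).det = 1 := fun θ => hdet _ (e.symm ⟨rot θ, rot_mem θ⟩).2
  -- q 2 ≠ 1
  have hq2 : qm e 2 ≠ 1 := by
    intro h
    have h2 : e.symm ⟨rot 2, rot_mem 2⟩ = 1 := cmm_inj (h.trans cmm_one.symm)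
    have h3 := congrArg e h2
    rw [e.apply_symm_apply, e.map_one] at h3
    have h4 : rot 2 = (1 : Matrix (Fin 2) (Fin 2) ℝ) := by
      have := congrArg Subtype.val h3
      simpa using this
    have h5 : Real.cos 2 = 1 := by
      have := congrFun (congrFun h4 0) 0
      simpa [rot, Matrix.one_apply] using this
    obtain ⟨n, hn⟩ := (Real.cos_eq_one_iff 2).mp h5
    have hπ := Real.pi_gt_three
    rcases lt_trichotomy n 0 with hlt | h0 | hgt
    · have hle' : n ≤ -1 := by omega
      have hle : (n:ℝ) ≤ -1 := by exact_mod_cast hle'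
      nlinarith
    · rw [h0] at hn; norm_num at hn
    · have hge : (1:ℝ) ≤ n := by exact_mod_cast hgt
      nlinarith
  have hgm2 : qm e 1 * qm e 1 ≠ 1 := by
    intro h
    apply hq2
    rw [show (2:ℝ) = 1 + 1 by norm_num, qm_hom]
    exact h
  -- axis
  obtain ⟨v, hv1, hgv⟩ := exists_unit_fixed (hq_orth 1) (hq_det 1)
  have hv0 : v ≠ 0 := by
    intro h
    rw [h] at hv1
    simp at hv1
  have hfixline : ∀ w, qm e 1 *ᵥ w = w → ∃ c : ℝ, w = c • v :=
    fun w hw => fixed_line (hq_orth 1) (hq_orth' 1) (hq_det 1) hgm2 hv0 hgv hw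
  obtain ⟨F, hF, hF', hdF, hFe3⟩ := exists_frame hv1
  -- sign dichotomy
  have hsign : ∀ m : Matrix (Fin 3) (Fin 3) ℝ, mᵀ * m = 1 →
      qm e 1 *ᵥ (m *ᵥ v) = m *ᵥ v → m *ᵥ v = v ∨ m *ᵥ v = -v := by
    intro m hmo h1
    obtain ⟨c, hc⟩ := hfixline _ h1
    have h2 : (m *ᵥ v) ⬝ᵥ (m *ᵥ v) = 1 := by rw [dot_preserve hmo, hv1]
    rw [hc] at h2 ⊢
    rw [smul_dotProduct, dotProduct_smul, hv1] at h2
    have hc2 : c * c = 1 := by simpa using h2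
    rcases mul_self_eq_one_iff.mp hc2 with h | h
    · left; rw [h, one_smul]
    · right; rw [h]; simp
  have hqcomm : ∀ θ, qm e 1 * qm e θ = qm e θ * qm e 1 := fun θ => by
    rw [← qm_hom, ← qm_hom, add_comm]
  have hqsign : ∀ θ, qm e θ *ᵥ v = v ∨ qm e θ *ᵥ v = -v := by
    intro θ
    apply hsign _ (hq_orth θ)
    rw [Matrix.mulVec_mulVec, hqcomm, ← Matrix.mulVec_mulVec, hgv]
  have hdotv : Continuous fun x : Fin 3 → ℝ => x ⬝ᵥ v := by
    unfold dotProduct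
    exact continuous_finset_sum _ fun i _ => (continuous_apply i).mul continuous_const
  -- all q θ fix v (connectedness)
  have hqfix : ∀ θ, qm e θ *ᵥ v = v := by
    set S : Set (Fin 3 → ℝ) :=
      (fun m : Matrix (Fin 3) (Fin 3) ℝ => m *ᵥ v) '' Set.range (qm e) with hS
    have hSconn : IsPreconnected S :=
      (isPreconnected_range (qm_cont e he')).image _
        ((Continuous.matrix_mulVec continuous_id continuous_const)).continuousOn
    have hU : IsOpen {x : Fin 3 → ℝ | 0 < x ⬝ᵥ v} := isOpen_lt continuous_const hdotv
    have hV : IsOpen {x : Fin 3 → ℝ | x ⬝ᵥ v < 0} := isOpen_lt hdotv continuous_const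
    have hdisj : Disjoint {x : Fin 3 → ℝ | 0 < x ⬝ᵥ v} {x : Fin 3 → ℝ | x ⬝ᵥ v < 0} := by
      rw [Set.disjoint_left]
      intro x hx hx'
      simp only [Set.mem_setOf_eq] at hx hx'
      linarith
    have hsub : S ⊆ {x : Fin 3 → ℝ | 0 < x ⬝ᵥ v} ∪ {x : Fin 3 → ℝ | x ⬝ᵥ v < 0} := by
      rintro s ⟨m, ⟨θ, rfl⟩, rfl⟩
      rcases hqsign θ with h | h
      · left
        show 0 < (qm e θ *ᵥ v) ⬝ᵥ v
        rw [h, hv1]; norm_num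
      · right
        show (qm e θ *ᵥ v) ⬝ᵥ v < 0
        rw [h, neg_dotProduct, hv1]; norm_num
    have hmem1 : v ∈ S ∩ {x : Fin 3 → ℝ | 0 < x ⬝ᵥ v} := by
      constructor
      · exact ⟨qm e 0, ⟨0, rfl⟩, by show qm e 0 *ᵥ v = v; rw [qm_zero, Matrix.one_mulVec]⟩
      · simp only [Set.mem_setOf_eq, hv1]; norm_num
    have hSU : S ⊆ {x : Fin 3 → ℝ | 0 < x ⬝ᵥ v} :=
      IsPreconnected.subset_left_of_subset_union hU hV hdisj hsub ⟨v, hmem1⟩ hSconn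
    intro θ
    rcases hqsign θ with h | h
    · exact h
    · exfalso
      have hmem : qm e θ *ᵥ v ∈ S := ⟨qm e θ, ⟨θ, rfl⟩, rfl⟩
      have := hSU hmem
      rw [h] at this
      simp only [Set.mem_setOf_eq, neg_dotProduct, hv1] at this
      linarith
  -- φ facts
  have hφ_mem : ∀ θ, phim F θ ∈ Matrix.orthogonalGroup (Fin 3) ℝ ∧ (phim F θ).det = 1 :=
    fun θ => conj_mem hF hF' hdF (rot_mem θ)
  have hφv : ∀ θ, phim F θ *ᵥ v = v := by
    intro θ
    have := conj_mulVec hF hFe3 (rot θ)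
    rw [rot_det, one_smul] at this
    exact this
  -- stabilizer classification: fixed matrices are φ's
  have hq_to_φ : ∀ m : Matrix (Fin 3) (Fin 3) ℝ, mᵀ * m = 1 → m.det = 1 → m *ᵥ v = v →
      ∃ ψ, m = phim F ψ := by
    intro m h1 h2 h3
    obtain ⟨A, hA, hdA, hm⟩ := stab_classify hF hF' hdF hFe3 h1 h2
      (by norm_num : (1:ℝ) * 1 = 1) (by rw [h3, one_smul])
    obtain ⟨ψ, -, hψ⟩ := rot_surj hA hdA
    exact ⟨ψ, by rw [hm, hψ]; rfl⟩
  -- the key: every φ is a q (closed subgroup of circle argument)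
  have hφ_in_q : ∀ ψ, ∃ θ, phim F ψ = qm e θ := by
    set K' : AddSubgroup ℝ :=
      { carrier := {ψ | ∃ θ, phim F ψ = qm e θ}
        add_mem' := by
          rintro a b ⟨s, hs⟩ ⟨t, ht⟩
          exact ⟨s + t, by rw [phim_hom hF, hs, ht, qm_hom]⟩
        zero_mem' := ⟨0, by rw [qm_zero, phim_zero hF']⟩
        neg_mem' := by
          rintro a ⟨s, hs⟩
          refine ⟨-s, ?_⟩
          have h1 : phim F a * qm e (-s) = 1 := by
            rw [hs, ← qm_hom]
            norm_num [qm_zero]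
          have h2 : phim F (-a) * phim F a = 1 := by
            rw [← phim_hom hF]
            norm_num [phim_zero hF']
          calc phim F (-a) = phim F (-a) * (phim F a * qm e (-s)) := by
                rw [h1, Matrix.mul_one]
          _ = (phim F (-a) * phim F a) * qm e (-s) := by rw [Matrix.mul_assoc]
          _ = qm e (-s) := by rw [h2, Matrix.one_mul] } with hK'
    have hKrange : Set.range (qm e) = qm e '' Set.Icc (-Real.pi) Real.pi := by
      apply Set.Subset.antisymm
      · rintro m ⟨θ, rfl⟩
        obtain ⟨θ', hθ', hrotθ⟩ := rot_surj (rot_mem θ) (rot_det θ)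
        refine ⟨θ', hθ', ?_⟩
        have hsub : (⟨rot θ', rot_mem _⟩ : Matrix.orthogonalGroup (Fin 2) ℝ) =
            ⟨rot θ, rot_mem _⟩ := Subtype.ext hrotθ.symm
        rw [qm, qm, hsub]
      · rintro m ⟨θ, -, rfl⟩
        exact ⟨θ, rfl⟩
    have hKcompact : IsCompact (Set.range (qm e)) := by
      rw [hKrange]
      exact isCompact_Icc.image (qm_cont e he')
    have hK'closed : IsClosed (K' : Set ℝ) := by
      have hKe : (K' : Set ℝ) = phim F ⁻¹' Set.range (qm e) := by
        ext ψ
        simp only [Set.mem_preimage, Set.mem_range, hK', SetLike.mem_coe,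
          AddSubgroup.mem_mk, Set.mem_setOf_eq]
        exact exists_congr fun θ => eq_comm
      rw [hKe]
      exact hKcompact.isClosed.preimage (phim_cont F)
    rcases AddSubgroup.dense_or_cyclic K' with hdense | ⟨a, ha⟩
    · have huniv : (K' : Set ℝ) = Set.univ := by
        rw [← hK'closed.closure_eq, hdense.closure_eq]
      intro ψ
      have : ψ ∈ K' := by rw [← SetLike.mem_coe, huniv]; trivial
      exact this
    · exfalso
      have h2π : (2 * Real.pi) ∈ K' := ⟨0, by rw [qm_zero, phim_two_pi hF']⟩
      have key : ∀ n : ℕ, ∃ kk : ℤ, qm e (n:ℝ) = phim F ((kk:ℝ) * a) := by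
        intro n
        obtain ⟨ψ, hψ⟩ := hq_to_φ (qm e (n:ℝ)) (hq_orth _) (hq_det _) (hqfix _)
        have hmem : ψ ∈ K' := ⟨(n:ℝ), hψ.symm⟩
        rw [ha] at hmem
        obtain ⟨kk, hkk⟩ := AddSubgroup.mem_closure_singleton.mp hmem
        refine ⟨kk, ?_⟩
        rw [hψ, ← hkk, zsmul_eq_mul]
      choose k hk using key
      obtain ⟨m, hm⟩ : ∃ m : ℤ, (m:ℝ) * a = 2 * Real.pi := by
        rw [ha] at h2π
        obtain ⟨m, hm⟩ := AddSubgroup.mem_closure_singleton.mp h2π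
        exact ⟨m, by rw [← hm, zsmul_eq_mul]⟩
      have hm0 : m ≠ 0 := by
        rintro rfl
        norm_num at hm
      set mN : ℕ := m.natAbs with hmN
      have hmN0 : 0 < mN := Int.natAbs_pos.mpr hm0
      have hca : phim F ((mN:ℝ) * a) = 1 := by
        rcases Int.natAbs_eq m with hme | hme
        · have hc1 : ((mN:ℝ)) = (m:ℝ) := by
            have := congrArg (fun z : ℤ => (z:ℝ)) hme
            simp only [Int.cast_natCast] at this
            rw [hmN]
            linarith
          rw [hc1, hm, phim_two_pi hF']
        · have hmr : ((mN:ℝ)) * a = -(2 * Real.pi) := by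
            have hcast : (m:ℝ) = -(mN:ℝ) := by
              have := congrArg (fun z : ℤ => (z:ℝ)) hme
              simp only [Int.cast_neg, Int.cast_natCast] at this
              rw [hmN]
              linarith
            rw [hcast] at hm
            linarith
          rw [hmr]
          have hp : phim F (2 * Real.pi) = 1 := phim_two_pi hF'
          have hsum := phim_hom hF (-(2 * Real.pi)) (2 * Real.pi)
          rw [hp, Matrix.mul_one] at hsum
          rw [show -(2*Real.pi) + 2*Real.pi = 0 by ring, phim_zero hF'] at hsum
          exact hsum.symm
      have hred : ∀ n : ℕ, qm e (n:ℝ) = phim F (((k n % (mN:ℤ) : ℤ):ℝ) * a) := by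
        intro n
        rw [hk n]
        have hdiv : k n = (mN:ℤ) * (k n / (mN:ℤ)) + k n % (mN:ℤ) := (Int.mul_ediv_add_emod _ _).symm
        have hdivR : ((k n : ℝ)) = (mN:ℝ) * ((k n / (mN:ℤ) : ℤ):ℝ) + ((k n % (mN:ℤ) : ℤ):ℝ) := by
          have := congrArg (fun z : ℤ => (z:ℝ)) hdiv
          push_cast at this ⊢
          linarith
        have harg : ((k n : ℝ)) * a =
            ((k n / (mN:ℤ) : ℤ):ℝ) * ((mN:ℝ) * a) + ((k n % (mN:ℤ) : ℤ):ℝ) * a := by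
          linear_combination a * hdivR
        rw [harg, hom_period (phim_hom hF) (phim_zero hF') hca]
      have hmaps : ∀ n ∈ Finset.range (mN+1), (k n % (mN:ℤ)).toNat ∈ Finset.range mN := by
        intro n _
        have h1 : 0 ≤ k n % (mN:ℤ) := Int.emod_nonneg _ (by exact_mod_cast hmN0.ne')
        have h2 : k n % (mN:ℤ) < mN := Int.emod_lt_of_pos _ (by exact_mod_cast hmN0)
        rw [Finset.mem_range]
        omega
      obtain ⟨n1, hn1, n2, hn2, hne, heq⟩ :=
        Finset.exists_ne_map_eq_of_card_lt_of_maps_to (by simp) hmaps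
      have hres : k n1 % (mN:ℤ) = k n2 % (mN:ℤ) := by
        have h1 : 0 ≤ k n1 % (mN:ℤ) := Int.emod_nonneg _ (by exact_mod_cast hmN0.ne')
        have h2 : 0 ≤ k n2 % (mN:ℤ) := Int.emod_nonneg _ (by exact_mod_cast hmN0.ne')
        omega
      have hqeq : qm e (n1:ℝ) = qm e (n2:ℝ) := by rw [hred n1, hred n2, hres]
      have hcancel : ∀ p1 p2 : ℕ, p1 < p2 → qm e (p1:ℝ) = qm e (p2:ℝ) →
          qm e ((p2 - p1 : ℕ):ℝ) = 1 := by
        intro p1 p2 hlt hq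
        have hinv : qm e (p1:ℝ) * qm e (-(p1:ℝ)) = 1 := by
          rw [← qm_hom]
          norm_num [qm_zero]
        have hcast : ((p2 - p1 : ℕ):ℝ) = (p2:ℝ) - (p1:ℝ) := by
          push_cast [Nat.cast_sub hlt.le]; ring
        calc qm e ((p2 - p1 : ℕ):ℝ)
            = qm e ((p2 - p1 : ℕ):ℝ) * (qm e (p1:ℝ) * qm e (-(p1:ℝ))) := by
              rw [hinv, Matrix.mul_one]
        _ = (qm e ((p2 - p1 : ℕ):ℝ) * qm e (p1:ℝ)) * qm e (-(p1:ℝ)) := by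
              rw [Matrix.mul_assoc]
        _ = qm e (p2:ℝ) * qm e (-(p1:ℝ)) := by
              rw [← qm_hom, hcast, show (p2:ℝ) - (p1:ℝ) + (p1:ℝ) = (p2:ℝ) by ring]
        _ = qm e (p1:ℝ) * qm e (-(p1:ℝ)) := by rw [← hq]
        _ = 1 := hinv
      obtain ⟨d, hd0, hd1⟩ : ∃ d : ℕ, 0 < d ∧ qm e (d:ℝ) = 1 := by
        rcases lt_or_gt_of_ne hne with hlt | hlt
        · exact ⟨n2 - n1, by omega, hcancel n1 n2 hlt hqeq⟩
        · exact ⟨n1 - n2, by omega, hcancel n2 n1 hlt hqeq.symm⟩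
      have hrotd : rot (d:ℝ) = 1 := by
        have h2 : e.symm ⟨rot (d:ℝ), rot_mem _⟩ = 1 := cmm_inj (hd1.trans cmm_one.symm)
        have h3 := congrArg e h2
        rw [e.apply_symm_apply, e.map_one] at h3
        have := congrArg Subtype.val h3
        simpa using this
      have hcos : Real.cos (d:ℝ) = 1 := by
        have := congrFun (congrFun hrotd 0) 0
        simpa [rot, Matrix.one_apply] using this
      obtain ⟨n, hn⟩ := (Real.cos_eq_one_iff _).mp hcos
      have hn0 : n ≠ 0 := by
        rintro rfl
        norm_num at hn
        have : d = 0 := by exact_mod_cast hn.symm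
        omega
      apply irrational_pi
      refine ⟨(d : ℚ) / (2 * n), ?_⟩
      have hn0' : (n:ℝ) ≠ 0 := Int.cast_ne_zero.mpr hn0
      push_cast
      rw [div_eq_iff (by exact mul_ne_zero two_ne_zero hn0' : (2:ℝ) * n ≠ 0)]
      linear_combination -hn
  -- the reflection element
  set xr : H := e.symm ⟨rho, rho_mem⟩ with hxr
  have hrm_orth : (cmm xr)ᵀ * cmm xr = 1 :=
    (memO_iff _).mp ((xr : Matrix.orthogonalGroup (Fin 3) ℝ)).2
  have hrm_det : (cmm xr).det = 1 := hdet _ xr.2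
  have hxr2 : xr * xr = 1 := by
    have h1 : (⟨rho, rho_mem⟩ : Matrix.orthogonalGroup (Fin 2) ℝ) * ⟨rho, rho_mem⟩ = 1 :=
      Subtype.ext (by simpa using rho_sq)
    rw [hxr, ← e.symm.map_mul, h1, e.symm.map_one]
  have hrm2 : cmm xr * cmm xr = 1 := by
    rw [← cmm_mul, hxr2, cmm_one]
  have hrq1 : cmm xr * qm e 1 * cmm xr = qm e (-1) := by
    have h1 : (⟨rho, rho_mem⟩ : Matrix.orthogonalGroup (Fin 2) ℝ) * ⟨rot 1, rot_mem 1⟩ *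
        ⟨rho, rho_mem⟩ = ⟨rot (-1), rot_mem _⟩ := Subtype.ext (by simpa using rho_rot_rho 1)
    show cmm xr * cmm (e.symm ⟨rot 1, rot_mem 1⟩) * cmm xr = cmm (e.symm ⟨rot (-1), rot_mem _⟩)
    rw [hxr, ← cmm_mul, ← cmm_mul, ← e.symm.map_mul, ← e.symm.map_mul, h1]
  -- xr sends v to -v
  have hrv : cmm xr *ᵥ v = -v := by
    have h1 : qm e 1 *ᵥ (cmm xr *ᵥ v) = cmm xr *ᵥ v := by
      have hcomm : qm e 1 * cmm xr = cmm xr * qm e (-1) := by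
        calc qm e 1 * cmm xr = (cmm xr * cmm xr) * qm e 1 * cmm xr := by
              rw [hrm2, Matrix.one_mul]
        _ = cmm xr * (cmm xr * qm e 1 * cmm xr) := by simp only [Matrix.mul_assoc]
        _ = cmm xr * qm e (-1) := by rw [hrq1]
      rw [Matrix.mulVec_mulVec, hcomm, ← Matrix.mulVec_mulVec, hqfix (-1)]
    rcases hsign _ hrm_orth h1 with h | h
    · exfalso
      obtain ⟨ψ, hψ⟩ := hq_to_φ _ hrm_orth hrm_det h
      obtain ⟨θ, hθ⟩ := hφ_in_q ψ
      have hxq : xr = e.symm ⟨rot θ, rot_mem θ⟩ := cmm_inj (hψ.trans hθ)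
      have h3 := congrArg e hxq
      rw [hxr, e.apply_symm_apply, e.apply_symm_apply] at h3
      have h4 : rho = rot θ := congrArg Subtype.val h3
      have h5 := rho_det
      rw [h4, rot_det] at h5
      norm_num at h5
    · exact h
  -- determinant of e-image helpers
  have hcoe_mul : ∀ X Y : Matrix.orthogonalGroup (Fin 2) ℝ,
      ((X * Y : Matrix.orthogonalGroup (Fin 2) ℝ) : Matrix (Fin 2) (Fin 2) ℝ) =
        (X : Matrix (Fin 2) (Fin 2) ℝ) * Y := fun X Y => rfl
  have hdexr : ((e xr : Matrix.orthogonalGroup (Fin 2) ℝ) : Matrix (Fin 2) (Fin 2) ℝ).det = -1 := by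
    rw [hxr, e.apply_symm_apply]
    exact rho_det
  -- final conclusion
  refine ⟨F, Matrix.mem_specialOrthogonalGroup_iff.mpr ⟨(memO_iff _).mpr hF, hdF⟩, ?_⟩
  ext M
  constructor
  · rintro ⟨X, hX, rfl⟩
    have hXorth : ((X : Matrix (Fin 3) (Fin 3) ℝ))ᵀ * X = 1 := (memO_iff _).mp X.2
    have hXdet : ((X : Matrix (Fin 3) (Fin 3) ℝ)).det = 1 := hdet X hX
    set x : H := ⟨X, hX⟩ with hx
    have hcx : (X : Matrix (Fin 3) (Fin 3) ℝ) = cmm x := rfl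
    rcases detO2 (e x).2 with hdx | hdx
    · -- det (e x) = 1 : x is in the circle
      obtain ⟨θ, -, hθ⟩ := rot_surj (e x).2 hdx
      have hxq : cmm x = qm e θ := by
        have h1 : e x = ⟨rot θ, rot_mem θ⟩ := Subtype.ext hθ
        rw [qm, ← h1, e.symm_apply_apply]
      have hMv : (X : Matrix (Fin 3) (Fin 3) ℝ) *ᵥ v = (1:ℝ) • v := by
        rw [hcx, hxq, hqfix, one_smul]
      obtain ⟨A, hA, -, hM⟩ := stab_classify hF hF' hdF hFe3 hXorth hXdet
        (by norm_num : (1:ℝ) * 1 = 1) hMv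
      exact ⟨A, hA, hM⟩
    · -- det (e x) = -1 : x = xr * y
      set y : H := xr * x with hy
      have hdy : ((e y : Matrix.orthogonalGroup (Fin 2) ℝ) : Matrix (Fin 2) (Fin 2) ℝ).det = 1 := by
        rw [hy, e.map_mul, hcoe_mul, Matrix.det_mul, hdexr, hdx]
        norm_num
      obtain ⟨θ, -, hθ⟩ := rot_surj (e y).2 hdy
      have hyq : cmm y = qm e θ := by
        have h1 : e y = ⟨rot θ, rot_mem θ⟩ := Subtype.ext hθ
        rw [qm, ← h1, e.symm_apply_apply]
      have hx_eq : cmm x = cmm xr * cmm y := by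
        rw [← cmm_mul, hy, ← mul_assoc, hxr2, one_mul]
      have hMv : (X : Matrix (Fin 3) (Fin 3) ℝ) *ᵥ v = (-1:ℝ) • v := by
        rw [hcx, hx_eq, ← Matrix.mulVec_mulVec, hyq, hqfix θ, hrv]
        simp
      obtain ⟨A, hA, -, hM⟩ := stab_classify hF hF' hdF hFe3 hXorth hXdet
        (by norm_num : (-1:ℝ) * (-1) = 1) hMv
      exact ⟨A, hA, hM⟩
  · rintro ⟨A, hA, rfl⟩
    rcases detO2 hA with hdA | hdA
    · obtain ⟨ψ, -, hψ⟩ := rot_surj hA hdA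
      obtain ⟨θ, hθ⟩ := hφ_in_q ψ
      refine ⟨(e.symm ⟨rot θ, rot_mem θ⟩ : H), (e.symm ⟨rot θ, rot_mem θ⟩).2, ?_⟩
      show qm e θ = F * blockEmbed A * Fᵀ
      rw [hψ]
      exact hθ.symm
    · have hMv : (F * blockEmbed A * Fᵀ) *ᵥ v = -v := by
        rw [conj_mulVec hF hFe3, hdA]
        simp
      have horth := conj_mem hF hF' hdF hA
      have hM'orth : (cmm xr * (F * blockEmbed A * Fᵀ))ᵀ * (cmm xr * (F * blockEmbed A * Fᵀ)) = 1 := by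
        calc (cmm xr * (F * blockEmbed A * Fᵀ))ᵀ * (cmm xr * (F * blockEmbed A * Fᵀ))
            = (F * blockEmbed A * Fᵀ)ᵀ * (((cmm xr)ᵀ * cmm xr) * (F * blockEmbed A * Fᵀ)) := by
              rw [Matrix.transpose_mul]
              simp only [Matrix.mul_assoc]
        _ = 1 := by rw [hrm_orth, Matrix.one_mul, (memO_iff _).mp horth.1]
      have hM'det : (cmm xr * (F * blockEmbed A * Fᵀ)).det = 1 := by
        rw [Matrix.det_mul, hrm_det, horth.2, one_mul]
      have hM'v : (cmm xr * (F * blockEmbed A * Fᵀ)) *ᵥ v = v := by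
        rw [← Matrix.mulVec_mulVec, hMv, Matrix.mulVec_neg, hrv, neg_neg]
      obtain ⟨ψ, hψ⟩ := hq_to_φ _ hM'orth hM'det hM'v
      obtain ⟨θ, hθ⟩ := hφ_in_q ψ
      refine ⟨(xr * e.symm ⟨rot θ, rot_mem θ⟩ : H), (xr * e.symm ⟨rot θ, rot_mem θ⟩).2, ?_⟩
      show cmm (xr * e.symm ⟨rot θ, rot_mem θ⟩) = F * blockEmbed A * Fᵀ
      rw [cmm_mul]
      have h1 : cmm (e.symm ⟨rot θ, rot_mem θ⟩) = cmm xr * (F * blockEmbed A * Fᵀ) := by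
        show qm e θ = cmm xr * (F * blockEmbed A * Fᵀ)
        rw [← hθ, ← hψ]
      rw [h1, ← Matrix.mul_assoc, hrm2, Matrix.one_mul]
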